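/- arXiv:1111.4282 — 6 statements merged into one kernel-verified Lean document; each statement's English description precedes it below -/
import Mathlib

section
/- Let (G, X) be a second-countable transformation group, let z ∈ X, and let (x_n) be a sequence in X such that S_{x_n} → S_z in the Fell topology on closed subgroups of G. Let W be a compact subset of G. Then the values χ_{W S_{x_n}}(r) of the characteristic functions converge to χ_{W S_z}(r) for every r ∈ (G \ W S_z) ∪ (Int W) S_z. Moreover, if μ(W S_z \ (Int W) S_z) = 0 for a left Haar measure μ on G, then χ_{W S_{x_n}} → χ_{W S_z} μ-almost everywhere on G. -/
open MeasureTheory Filter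
open scoped Pointwise Topology

/-- Convergence `S n → T` of closed subgroups in the Fell topology, characterized
sequentially: (i) every element of `T` is a limit of elements of the `S n`;
(ii) every limit of elements along a subsequence lies in `T`. -/
def FellConvergent {G : Type*} [Group G] [TopologicalSpace G]
    (S : ℕ → Subgroup G) (T : Subgroup G) : Prop :=
  (∀ h ∈ T, ∃ u : ℕ → G, (∀ n, u n ∈ S n) ∧ Tendsto u atTop (𝓝 h)) ∧
  (∀ φ : ℕ → ℕ, StrictMono φ → ∀ u : ℕ → G, (∀ k, u k ∈ S (φ k)) →
    ∀ h : G, Tendsto u atTop (𝓝 h) → h ∈ T)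

/-- If `S_{x_n} → S_z` in the Fell topology and `W ⊆ G` is compact, then
`χ_{W S_{x_n}}(r) → χ_{W S_z}(r)` for every `r ∈ (G \ W S_z) ∪ (Int W) S_z`; and if
`μ(W S_z \ (Int W) S_z) = 0` for a left Haar measure `μ`, then `χ_{W S_{x_n}} → χ_{W S_z}`
`μ`-almost everywhere. -/
theorem stmt1 {G X : Type*} [Group G] [TopologicalSpace G] [IsTopologicalGroup G]
    [LocallyCompactSpace G] [T2Space G] [SecondCountableTopology G]
    [TopologicalSpace X] [T2Space X] [LocallyCompactSpace X] [SecondCountableTopology X]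
    [MulAction G X] [ContinuousSMul G X]
    [MeasurableSpace G] [BorelSpace G]
    (μ : Measure G) [μ.IsHaarMeasure]
    (z : X) (x : ℕ → X)
    (hF : FellConvergent (fun n => MulAction.stabilizer G (x n)) (MulAction.stabilizer G z))
    (W : Set G) (hW : IsCompact W) :
    (∀ r ∈ (W * (MulAction.stabilizer G z : Set G))ᶜ ∪
        (interior W * (MulAction.stabilizer G z : Set G)),
      Tendsto
        (fun n => (W * (MulAction.stabilizer G (x n) : Set G)).indicator
          (fun _ => (1 : ℝ)) r)
        atTop
        (𝓝 ((W * (MulAction.stabilizer G z : Set G)).indicator (fun _ => (1 : ℝ)) r))) ∧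
    (μ ((W * (MulAction.stabilizer G z : Set G)) \
          (interior W * (MulAction.stabilizer G z : Set G))) = 0 →
      ∀ᵐ r ∂μ, Tendsto
        (fun n => (W * (MulAction.stabilizer G (x n) : Set G)).indicator
          (fun _ => (1 : ℝ)) r)
        atTop
        (𝓝 ((W * (MulAction.stabilizer G z : Set G)).indicator (fun _ => (1 : ℝ)) r))) := by
  classical
  have key : ∀ r ∈ (W * (MulAction.stabilizer G z : Set G))ᶜ ∪
      (interior W * (MulAction.stabilizer G z : Set G)),
      Tendsto
        (fun n => (W * (MulAction.stabilizer G (x n) : Set G)).indicator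
          (fun _ => (1 : ℝ)) r)
        atTop
        (𝓝 ((W * (MulAction.stabilizer G z : Set G)).indicator (fun _ => (1 : ℝ)) r)) := by
    intro r hr
    rcases hr with hr | hr
    · rw [Set.indicator_of_notMem hr]
      have hev : ∀ᶠ n in atTop, r ∉ W * (MulAction.stabilizer G (x n) : Set G) := by
        by_contra hcon
        rw [Filter.not_eventually] at hcon
        simp only [not_not] at hcon
        obtain ⟨φ, hφ, hmem⟩ := Filter.extraction_of_frequently_atTop hcon
        choose w hw t ht hwt using fun k => Set.mem_mul.mp (hmem k)
        obtain ⟨a, haW, ψ, hψ, hlim⟩ := hW.tendsto_subseq hw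
        have hteq : ∀ k, t (ψ k) = (w (ψ k))⁻¹ * r := by
          intro k; rw [← hwt (ψ k)]; group
        have hlt : Tendsto (fun k => t (ψ k)) atTop (𝓝 (a⁻¹ * r)) := by
          simp only [hteq]
          exact (hlim.inv).mul tendsto_const_nhds
        have hmemz : a⁻¹ * r ∈ MulAction.stabilizer G z :=
          hF.2 (φ ∘ ψ) (hφ.comp hψ) (fun k => t (ψ k)) (fun k => ht (ψ k)) _ hlt
        apply hr
        have : a * (a⁻¹ * r) ∈ W * (MulAction.stabilizer G z : Set G) :=
          Set.mul_mem_mul haW hmemz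
        simpa using this
      refine tendsto_const_nhds.congr' (hev.mono fun n hn => ?_)
      exact (Set.indicator_of_notMem hn (fun _ => (1 : ℝ))).symm
    · obtain ⟨w, hw, t, ht, hwt⟩ := Set.mem_mul.mp hr
      have hrW : r ∈ W * (MulAction.stabilizer G z : Set G) :=
        Set.mul_subset_mul_right interior_subset hr
      rw [Set.indicator_of_mem hrW]
      obtain ⟨u, hu, hul⟩ := hF.1 t ht
      have hwint : r * t⁻¹ ∈ interior W := by
        rw [← hwt]; simpa using hw
      have hlim : Tendsto (fun n => r * (u n)⁻¹) atTop (𝓝 (r * t⁻¹)) :=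
        tendsto_const_nhds.mul hul.inv
      have hev : ∀ᶠ n in atTop, r * (u n)⁻¹ ∈ interior W :=
        hlim.eventually (isOpen_interior.eventually_mem hwint)
      refine tendsto_const_nhds.congr' (hev.mono fun n hn => ?_)
      have hmm : r ∈ W * (MulAction.stabilizer G (x n) : Set G) := by
        have : (r * (u n)⁻¹) * u n ∈ W * (MulAction.stabilizer G (x n) : Set G) :=
          Set.mul_mem_mul (interior_subset hn) (hu n)
        simpa using this
      exact (Set.indicator_of_mem hmm (fun _ => (1 : ℝ))).symm
  refine ⟨key, fun hnull => ?_⟩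
  have hae : ∀ᵐ r ∂μ, r ∉ (W * (MulAction.stabilizer G z : Set G)) \
      (interior W * (MulAction.stabilizer G z : Set G)) :=
    measure_eq_zero_iff_ae_notMem.mp hnull
  filter_upwards [hae] with r hr
  apply key
  by_cases h : r ∈ W * (MulAction.stabilizer G z : Set G)
  · right
    by_contra h2
    exact hr ⟨h, h2⟩
  · exact Or.inl h
end

section
/- Let (G, X) be a second-countable transformation group, let z ∈ X, and let (x_n) be a sequence in X such that S_{x_n} → S_z in the Fell topology on closed subgroups of G. Let W be a compact subset of G. Then the sets W S_{x_n} and W S_z are closed in G, and W S_{x_n} → W S_z in the Kuratowski sense: (a) every s ∈ W S_z is the limit of a sequence (s_n) with s_n ∈ W S_{x_n} for all n; and (b) whenever s_n ∈ W S_{x_n} for all n and s_n → s in G, then s ∈ W S_z. -/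
open Filter
open scoped Pointwise Topology

theorem stabilizer_isClosed' {G X : Type*} [Group G] [TopologicalSpace G]
    [TopologicalSpace X] [T2Space X] [MulAction G X] [ContinuousSMul G X] (x : X) :
    IsClosed (MulAction.stabilizer G x : Set G) := by
  have : (MulAction.stabilizer G x : Set G) = {g : G | g • x = x} := rfl
  rw [this]
  exact isClosed_eq (continuous_id.smul continuous_const) continuous_const

/-- If `S_{x_n} → S_z` in the Fell topology and `W ⊆ G` is compact, then the
sets `W S_{x_n}` and `W S_z` are closed, and `W S_{x_n} → W S_z` in the Kuratowski sense:
(a) every point of `W S_z` is a limit of a sequence with `s_n ∈ W S_{x_n}`; (b) any limit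
of a sequence with `s_n ∈ W S_{x_n}` lies in `W S_z`. -/
theorem stmt2 {G X : Type*} [Group G] [TopologicalSpace G] [IsTopologicalGroup G]
    [LocallyCompactSpace G] [T2Space G] [SecondCountableTopology G]
    [TopologicalSpace X] [T2Space X] [LocallyCompactSpace X] [SecondCountableTopology X]
    [MulAction G X] [ContinuousSMul G X]
    (z : X) (x : ℕ → X)
    (hF : FellConvergent (fun n => MulAction.stabilizer G (x n)) (MulAction.stabilizer G z))
    (W : Set G) (hW : IsCompact W) :
    (∀ n, IsClosed (W * (MulAction.stabilizer G (x n) : Set G))) ∧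
    IsClosed (W * (MulAction.stabilizer G z : Set G)) ∧
    (∀ s ∈ W * (MulAction.stabilizer G z : Set G),
      ∃ u : ℕ → G, (∀ n, u n ∈ W * (MulAction.stabilizer G (x n) : Set G)) ∧
        Tendsto u atTop (𝓝 s)) ∧
    (∀ u : ℕ → G, (∀ n, u n ∈ W * (MulAction.stabilizer G (x n) : Set G)) →
      ∀ s : G, Tendsto u atTop (𝓝 s) → s ∈ W * (MulAction.stabilizer G z : Set G)) := by
  refine ⟨fun n => (stabilizer_isClosed' (x n)).mul_left_of_isCompact hW,
    (stabilizer_isClosed' z).mul_left_of_isCompact hW, ?_, ?_⟩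
  · rintro s ⟨w, hw, t, ht, rfl⟩
    obtain ⟨u, hu, hul⟩ := hF.1 t ht
    exact ⟨fun n => w * u n, fun n => ⟨w, hw, u n, hu n, rfl⟩,
      (tendsto_const_nhds.mul hul)⟩
  · intro u hu s hs
    choose w hwW t ht hwt using hu
    obtain ⟨a, haW, φ, hφ, hconv⟩ := hW.tendsto_subseq hwW
    have htconv : Tendsto (fun k => (w (φ k))⁻¹ * u (φ k)) atTop (𝓝 (a⁻¹ * s)) :=
      (hconv.inv).mul (hs.comp hφ.tendsto_atTop)
    have hmem : ∀ k, (w (φ k))⁻¹ * u (φ k) ∈ MulAction.stabilizer G (x (φ k)) := by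
      intro k
      rw [← hwt (φ k)]
      simpa using ht (φ k)
    have h2 := hF.2 φ hφ _ hmem _ htconv
    exact ⟨a, haW, a⁻¹ * s, h2, by group⟩
end

section
/- Let G be a locally compact abelian group with Haar measure μ, and let S be a closed subgroup of G such that S is either countable or compact. Then there exists a compact symmetric neighbourhood W of the identity in G (i.e. W = W^{-1}) such that μ(WS \ (Int W)S) = 0. -/
open MeasureTheory
open scoped Pointwise

/-- For a locally compact abelian group `G` with Haar measure `μ` and a
closed subgroup `S` that is countable or compact, there is a compact symmetric
neighbourhood `W` of the identity with `μ(WS \ (Int W)S) = 0`. -/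
theorem stmt5 {G : Type*} [CommGroup G] [TopologicalSpace G] [IsTopologicalGroup G]
    [LocallyCompactSpace G] [T2Space G] [MeasurableSpace G] [BorelSpace G]
    (μ : Measure G) [μ.IsHaarMeasure]
    (S : Subgroup G) (hS : IsClosed (S : Set G))
    (hSc : (S : Set G).Countable ∨ IsCompact (S : Set G)) :
    ∃ W : Set G, IsCompact W ∧ W = W⁻¹ ∧ W ∈ nhds (1 : G) ∧
      μ ((W * (S : Set G)) \ (interior W * (S : Set G))) = 0 := by
  classical
  -- a bump function at 1
  obtain ⟨f, hf1, -, hfc, hf01⟩ :=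
    exists_continuous_one_zero_of_isCompact (isCompact_singleton (x := (1 : G)))
      isClosed_empty (Set.disjoint_empty _)
  set g : G → ℝ := fun x => f x + f x⁻¹ with hgdef
  have hgcont : Continuous g := f.continuous.add (f.continuous.comp continuous_inv)
  have hgcs : HasCompactSupport g := by
    have : HasCompactSupport fun x : G => f x⁻¹ :=
      hfc.comp_homeomorph (Homeomorph.inv G)
    exact hfc.add this
  have hg1 : g 1 = 2 := by
    have : f 1 = 1 := hf1 (Set.mem_singleton 1)
    simp [hgdef, this]
    norm_num
  have hgsymm : ∀ x : G, g x⁻¹ = g x := by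
    intro x; simp [hgdef, add_comm]
  -- the family of level sets
  set W : ℝ → Set G := fun r => {x | r ≤ g x} with hWdef
  have hWclosed : ∀ r, IsClosed (W r) := fun r => isClosed_le continuous_const hgcont
  have hWc : ∀ r, 0 < r → IsCompact (W r) := by
    intro r hr
    refine hgcs.of_isClosed_subset (hWclosed r) ?_
    intro x hx
    have hgx : r ≤ g x := hx
    apply subset_tsupport
    rw [Function.mem_support]
    intro hz
    rw [hz] at hgx; linarith
  have hWnhds : ∀ r, r < 2 → W r ∈ nhds 1 := by
    intro r hr
    have hop : IsOpen {x : G | r < g x} := isOpen_lt continuous_const hgcont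
    have h1 : (1 : G) ∈ {x : G | r < g x} := by
      simpa only [Set.mem_setOf_eq, hg1] using hr
    exact Filter.mem_of_superset (hop.mem_nhds h1) fun x hx => (le_of_lt hx : r ≤ g x)
  have hWsymm : ∀ r, W r = (W r)⁻¹ := by
    intro r
    ext x
    simp only [hWdef, Set.mem_inv, Set.mem_setOf_eq, hgsymm]
  have hWmono : ∀ r r' : ℝ, r' < r → W r ⊆ interior (W r') := by
    intro r r' h
    have h1 : W r ⊆ {x | r' < g x} := fun x hx => lt_of_lt_of_le h hx
    refine h1.trans ?_
    rw [IsOpen.subset_interior_iff (isOpen_lt continuous_const hgcont)]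
    exact fun x hx => (le_of_lt hx : r' ≤ g x)
  -- rewriting W r * S as a union of translates
  have hmulS : ∀ r, W r * (S : Set G) = ⋃ a ∈ (S : Set G), a • W r := by
    intro r
    rw [Set.iUnion_smul_set, smul_eq_mul, mul_comm]
  have hWSmeas : ∀ r, 0 < r → MeasurableSet (W r * (S : Set G)) := by
    intro r hr
    rcases hSc with hc | hcomp
    · rw [hmulS r]
      exact MeasurableSet.biUnion hc fun a _ =>
        (((hWc r hr).smul a).isClosed).measurableSet
    · exact (((hWc r hr).mul hcomp).isClosed).measurableSet
  have hopen : ∀ r, IsOpen (interior (W r) * (S : Set G)) := fun r =>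
    isOpen_interior.mul_right
  -- the big set T
  set T : Set G := W 1 * (S : Set G) with hTdef
  have hTmeas : MeasurableSet T := hWSmeas 1 one_pos
  -- the shells
  set A : Set.Ioo (1 : ℝ) 2 → Set G := fun r =>
    (W r * (S : Set G)) \ (interior (W r) * (S : Set G)) with hAdef
  have hAmeas : ∀ i, MeasurableSet (A i) := fun i =>
    (hWSmeas i (lt_trans one_pos i.2.1)).diff (hopen i).measurableSet
  have hAsub : ∀ i, A i ⊆ T := by
    intro i
    refine Set.diff_subset.trans ?_
    apply Set.mul_subset_mul_right
    exact fun x hx => le_trans (le_of_lt i.2.1) hx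
  have hAdisj : Pairwise (Function.onFun Disjoint A) := by
    have key : ∀ i j : Set.Ioo (1 : ℝ) 2, (i : ℝ) < j → Disjoint (A i) (A j) := by
      intro i j hij
      rw [Set.disjoint_left]
      intro x hxi hxj
      have h1 : A j ⊆ interior (W i) * (S : Set G) :=
        Set.diff_subset.trans (Set.mul_subset_mul_right (hWmono j i hij))
      exact hxi.2 (h1 hxj)
    intro i j hij
    rcases lt_or_gt_of_ne (fun h => hij (Subtype.ext h)) with h | h
    · exact key i j h
    · exact (key j i h).symm
  -- sigma-finiteness of the restricted measure
  haveI : SFinite (μ.restrict T) := by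
    rcases hSc with hc | hcomp
    · haveI : SigmaFinite (μ.restrict T) := by
        refine Measure.sigmaFinite_of_countable
          (S := (fun a => a • W 1 ∪ Tᶜ) '' (S : Set G)) (hc.image _) ?_ ?_
        · rintro s ⟨a, ha, rfl⟩
          rw [Measure.restrict_apply' hTmeas]
          refine lt_of_le_of_lt (measure_mono ?_) ((hWc 1 one_pos).smul a).measure_lt_top
          rintro x ⟨hx1, hx2⟩
          rcases hx1 with h | h
          · exact h
          · exact absurd hx2 h
        · apply Set.eq_univ_of_forall
          intro x
          by_cases hx : x ∈ T
          · rw [hTdef, hmulS 1] at hx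
            obtain ⟨a, ha, hxa⟩ := Set.mem_iUnion₂.mp hx
            exact Set.mem_sUnion.mpr ⟨_, ⟨a, ha, rfl⟩, Or.inl hxa⟩
          · exact Set.mem_sUnion.mpr ⟨_, ⟨1, S.one_mem, rfl⟩, Or.inr hx⟩
      infer_instance
    · haveI : IsFiniteMeasure (μ.restrict T) := by
        constructor
        rw [Measure.restrict_apply_univ]
        exact ((hWc 1 one_pos).mul hcomp).measure_lt_top
      infer_instance
  -- only countably many shells have positive measure
  have hcnt :
      Set.Countable {i : Set.Ioo (1 : ℝ) 2 | 0 < μ.restrict T (A i)} :=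
    Measure.countable_meas_pos_of_disjoint_iUnion (μ := μ.restrict T) hAmeas hAdisj
  -- but Ioo 1 2 is uncountable
  have huncount : ¬ (Set.univ : Set (Set.Ioo (1 : ℝ) 2)).Countable := by
    intro h
    have hcc : Countable (Set.Ioo (1 : ℝ) 2) := Set.countable_univ_iff.mp h
    have := Cardinal.mk_le_aleph0_iff.mpr hcc
    rw [Cardinal.mk_Ioo_real (show (1 : ℝ) < 2 by norm_num)] at this
    exact absurd this Cardinal.aleph0_lt_continuum.not_ge
  obtain ⟨i, -, hi⟩ : ∃ i ∈ (Set.univ : Set (Set.Ioo (1 : ℝ) 2)),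
      i ∉ {i : Set.Ioo (1 : ℝ) 2 | 0 < μ.restrict T (A i)} := by
    by_contra hcon
    push_neg at hcon
    exact huncount (hcnt.mono fun i _ => hcon i (Set.mem_univ i))
  have hAzero : μ (A i) = 0 := by
    have h0 : μ.restrict T (A i) = 0 := by
      simpa using (not_lt.mp hi).antisymm zero_le
    rw [Measure.restrict_apply' hTmeas, Set.inter_eq_self_of_subset_left (hAsub i)] at h0
    exact h0
  exact ⟨W i, hWc i (lt_trans one_pos i.2.1), hWsymm i, hWnhds i i.2.2, hAzero⟩
end

section
/- Let (G, X) be a second-countable transformation group. Let z ∈ X and let (x_n) be a sequence in X, with S_z and all S_{x_n} normal in G. Assume that the orbit G·z is locally closed in X and that S_z is compact. Let k be a positive integer, and assume that there exists a real number R > k−1 such that for every open neighbourhood U of z with φ_z^{-1}(U) relatively compact in G one has liminf_n ν_{x_n}(q_{x_n}(φ_{x_n}^{-1}(U))) ≥ R·ν_z(q_z(φ_z^{-1}(U))). Then for every open neighbourhood V of z such that φ_z^{-1}(V) is relatively compact, there exists a compact neighbourhood N of z with N ⊆ V such that liminf_n ν_{x_n}(q_{x_n}(φ_{x_n}^{-1}(N)))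 > (k−1)·ν_z(q_z(φ_z^{-1}(N))). -/
open MeasureTheory Filter Set
open scoped Pointwise Topology ENNReal

/-- The Weil formula: `∫_G f dμ = ∫_{G/S} ∫_S f(st) dα(t) dν(sS)` for all `f ∈ C_c(G)`. -/
def IsWeilTriple {G : Type*} [Group G] [TopologicalSpace G] [MeasurableSpace G]
    (μ : Measure G) (S : Subgroup G) (α : Measure S) (ν : Measure (G ⧸ S)) : Prop :=
  ∀ f : G → ℝ, Continuous f → HasCompactSupport f →
    ∫ s, f s ∂μ = ∫ c : G ⧸ S, (∫ t : S, f (Quotient.out c * (t : G)) ∂α) ∂ν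

/-- Right invariance of a measure on the quotient `G ⧸ S` (for `S` normal, the map
`sS ↦ sgS` is well defined; it sends `mk '' A` to `mk '' (A g)`). -/
def IsRightInvariantQuot {G : Type*} [Group G] [MeasurableSpace G]
    (S : Subgroup G) (ν : Measure (G ⧸ S)) : Prop :=
  ∀ g : G, ∀ A : Set G,
    ν (QuotientGroup.mk '' ((fun s => s * g) '' A)) = ν (QuotientGroup.mk '' A)

section Aux
variable {G : Type*} [Group G] [TopologicalSpace G] [IsTopologicalGroup G]
    [LocallyCompactSpace G] [T2Space G]
    [MeasurableSpace G] [BorelSpace G]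
    {μ : Measure G} [μ.IsHaarMeasure] {S : Subgroup G}
    {α : Measure S} {ν : Measure (G ⧸ S)}

lemma mk_out_mul_mem (c : G ⧸ S) (t : S) :
    QuotientGroup.mk (Quotient.out c * (t : G)) = c :=
  (QuotientGroup.mk_mul_of_mem _ t.2).trans (QuotientGroup.out_eq' c)

lemma weil_pos (hW : IsWeilTriple μ S α ν) {A : Set G} (hA : IsOpen A) (heA : (1 : G) ∈ A)
    (hsat : ∀ g ∈ A, ∀ t : S, g * (t : G) ∈ A) :
    0 < ν (QuotientGroup.mk '' A) := by
  obtain ⟨f, hf1, hf0, hfc, hf01⟩ :=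
    exists_continuous_one_zero_of_isCompact (isCompact_singleton (x := (1 : G)))
      hA.isClosed_compl (Set.disjoint_singleton_left.mpr (by simpa using heA))
  have hpos : 0 < ∫ g, f g ∂μ :=
    f.continuous.integral_pos_of_hasCompactSupport_nonneg_nonzero (x := (1 : G)) hfc
      (fun y => (hf01 y).1) (by rw [hf1 (mem_singleton _)]; norm_num)
  rw [hW f f.continuous hfc] at hpos
  by_contra h
  push_neg at h
  have hnull : ν (QuotientGroup.mk '' A) = 0 := le_antisymm h zero_le
  have hzero : ∫ c : G ⧸ S, (∫ t : S, f (Quotient.out c * (t : G)) ∂α) ∂ν = 0 := by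
    apply integral_eq_zero_of_ae
    rw [Filter.EventuallyEq, ae_iff]
    refine measure_mono_null ?_ hnull
    intro c hc
    simp only [mem_setOf_eq, Pi.zero_apply] at hc
    by_contra hcA
    apply hc
    have hz : ∀ t : S, f (Quotient.out c * (t : G)) = 0 := by
      intro t
      refine hf0 ?_
      intro hmem
      exact hcA ⟨_, hmem, mk_out_mul_mem c t⟩
    simp [hz]
  rw [hzero] at hpos
  exact lt_irrefl _ hpos

lemma weil_fin (hW : IsWeilTriple μ S α ν) (hα : α.IsHaarMeasure) (hS : IsCompact (S : Set G))
    {K : Set G} (hK : IsCompact K) (heK : (1 : G) ∈ interior K)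
    (hsat : ∀ g ∈ K, ∀ t : S, g * (t : G) ∈ K) :
    ν (QuotientGroup.mk '' K) < ⊤ := by
  haveI := hα
  haveI : CompactSpace S := isCompact_iff_compactSpace.mp hS
  obtain ⟨f, hf1, hf0, hfc, hf01⟩ :=
    exists_continuous_one_zero_of_isCompact hK isClosed_empty (disjoint_empty _)
  have hpos : 0 < ∫ g, f g ∂μ :=
    f.continuous.integral_pos_of_hasCompactSupport_nonneg_nonzero (x := (1 : G)) hfc
      (fun y => (hf01 y).1) (by rw [hf1 (interior_subset heK)]; norm_num)
  rw [hW f f.continuous hfc] at hpos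
  set F : G ⧸ S → ℝ := fun c => ∫ t : S, f (Quotient.out c * (t : G)) ∂α with hF
  have ha0 : α univ ≠ 0 := (isOpen_univ.measure_pos α ⟨⟨1, S.one_mem⟩, trivial⟩).ne'
  have hat : α univ ≠ ⊤ := (isCompact_univ.measure_lt_top).ne
  set a : ℝ := (α univ).toReal with haa
  have ha_pos : 0 < a := ENNReal.toReal_pos ha0 hat
  have key : ∀ c ∈ (QuotientGroup.mk '' K : Set (G ⧸ S)), F c = a := by
    rintro c ⟨g, hg, rfl⟩
    have hs : g⁻¹ * Quotient.out (QuotientGroup.mk g : G ⧸ S) ∈ S := by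
      apply QuotientGroup.eq.mp
      exact (QuotientGroup.out_eq' (QuotientGroup.mk g : G ⧸ S)).symm
    have hmem : ∀ t : S, Quotient.out (QuotientGroup.mk g : G ⧸ S) * (t : G) ∈ K := by
      intro t
      have := hsat g hg (⟨_, hs⟩ * t)
      simpa [mul_assoc, mul_inv_cancel_left] using this
    have hone : ∀ t : S, f (Quotient.out (QuotientGroup.mk g : G ⧸ S) * (t : G)) = 1 :=
      fun t => hf1 (hmem t)
    simp only [hF, hone, integral_const, smul_eq_mul, mul_one, haa, measureReal_def]
  have hInt : Integrable F ν := by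
    by_contra h
    rw [hF] at hpos
    rw [integral_undef h] at hpos
    exact lt_irrefl _ hpos
  calc ν (QuotientGroup.mk '' K) ≤ ν {c | a ≤ F c} := by
        apply measure_mono
        intro c hc
        exact (key c hc).ge
    _ < ⊤ := hInt.measure_ge_lt_top ha_pos

end Aux

/-- If `G·z` is locally closed, `S_z` is compact, and there is `R > k − 1`
such that `liminf_n ν_{x_n}(q_{x_n}(φ_{x_n}⁻¹ U)) ≥ R·ν_z(q_z(φ_z⁻¹ U))` for every open
neighbourhood `U` of `z` with relatively compact `φ_z⁻¹(U)`, then every open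
neighbourhood `V` of `z` with relatively compact `φ_z⁻¹(V)` contains a compact
neighbourhood `N` of `z` with
`liminf_n ν_{x_n}(q_{x_n}(φ_{x_n}⁻¹ N)) > (k−1)·ν_z(q_z(φ_z⁻¹ N))`. -/
theorem stmt6 {G X : Type*} [Group G] [TopologicalSpace G] [IsTopologicalGroup G]
    [LocallyCompactSpace G] [T2Space G] [SecondCountableTopology G]
    [TopologicalSpace X] [T2Space X] [LocallyCompactSpace X] [SecondCountableTopology X]
    [MulAction G X] [ContinuousSMul G X]
    [MeasurableSpace G] [BorelSpace G]
    (μ : Measure G) [μ.IsHaarMeasure]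
    (z : X) (x : ℕ → X)
    (hzN : (MulAction.stabilizer G z).Normal)
    (hnN : ∀ n, (MulAction.stabilizer G (x n)).Normal)
    (hlc : IsLocallyClosed (MulAction.orbit G z))
    (hSz : IsCompact (MulAction.stabilizer G z : Set G))
    (αz : Measure (MulAction.stabilizer G z)) (hαz : αz.IsHaarMeasure)
    (α : ∀ n, Measure (MulAction.stabilizer G (x n))) (hα : ∀ n, (α n).IsHaarMeasure)
    (νz : Measure (G ⧸ MulAction.stabilizer G z))
    (ν : ∀ n, Measure (G ⧸ MulAction.stabilizer G (x n)))
    (hWeilz : IsWeilTriple μ (MulAction.stabilizer G z) αz νz)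
    (hWeil : ∀ n, IsWeilTriple μ (MulAction.stabilizer G (x n)) (α n) (ν n))
    (hinvz : IsRightInvariantQuot (MulAction.stabilizer G z) νz)
    (hinv : ∀ n, IsRightInvariantQuot (MulAction.stabilizer G (x n)) (ν n))
    (k : ℕ) (hk : 0 < k) (R : ℝ) (hR : (k : ℝ) - 1 < R)
    (hliminf : ∀ U : Set X, IsOpen U → z ∈ U →
      IsCompact (closure {s : G | s • z ∈ U}) →
      ENNReal.ofReal R * νz (QuotientGroup.mk '' {s : G | s • z ∈ U}) ≤
        Filter.liminf (fun n => (ν n) (QuotientGroup.mk '' {s : G | s • x n ∈ U})) atTop) :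
    ∀ V : Set X, IsOpen V → z ∈ V → IsCompact (closure {s : G | s • z ∈ V}) →
      ∃ N : Set X, IsCompact N ∧ N ∈ 𝓝 z ∧ N ⊆ V ∧
        ((k - 1 : ℕ) : ℝ≥0∞) * νz (QuotientGroup.mk '' {s : G | s • z ∈ N}) <
          Filter.liminf (fun n => (ν n) (QuotientGroup.mk '' {s : G | s • x n ∈ N})) atTop := by
  intro V hVopen hzV hVcomp
  have hφ : Continuous (fun s : G => s • z) := continuous_id.smul continuous_const
  -- saturation of preimages
  have hsat : ∀ (W : Set X), ∀ g ∈ {s : G | s • z ∈ W}, ∀ t : MulAction.stabilizer G z,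
      g * (t : G) ∈ {s : G | s • z ∈ W} := by
    intro W g hg t
    have ht : (t : G) • z = z := t.2
    simp only [mem_setOf_eq, mul_smul, ht]
    exact hg
  -- Urysohn function on X
  obtain ⟨C, hCcomp, hzC, hCV⟩ : ∃ C, IsCompact C ∧ z ∈ interior C ∧ C ⊆ V :=
    exists_compact_subset hVopen hzV
  obtain ⟨ψ, hψ1, hψ0, hψc, hψ01⟩ :=
    exists_continuous_one_zero_of_isCompact (isCompact_singleton (x := z))
      isOpen_interior.isClosed_compl
      (Set.disjoint_singleton_left.mpr (by simpa using hzC))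
  -- families of neighbourhoods
  have hNtC : ∀ t ∈ Ioo (0:ℝ) 1, {y | t ≤ ψ y} ⊆ interior C := by
    intro t ht y hy
    by_contra hyC
    have h0 := hψ0 hyC
    simp only [Pi.zero_apply] at h0
    simp only [mem_setOf_eq, h0] at hy
    linarith [ht.1]
  have hNtV : ∀ t ∈ Ioo (0:ℝ) 1, {y | t ≤ ψ y} ⊆ V := fun t ht =>
    (hNtC t ht).trans (interior_subset.trans hCV)
  have hNtcomp : ∀ t ∈ Ioo (0:ℝ) 1, IsCompact {y | t ≤ ψ y} := fun t ht =>
    hCcomp.of_isClosed_subset (isClosed_le continuous_const ψ.continuous)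
      ((hNtC t ht).trans interior_subset)
  have hzU : ∀ t ∈ Ioo (0:ℝ) 1, z ∈ {y | t < ψ y} := by
    intro t ht
    have h1 : ψ z = 1 := hψ1 (mem_singleton _)
    simp only [mem_setOf_eq, h1]
    exact ht.2
  have hUopen : ∀ t : ℝ, IsOpen {y | t < ψ y} := fun t =>
    isOpen_lt continuous_const ψ.continuous
  have hUN : ∀ t : ℝ, {y : X | t < ψ y} ⊆ {y | t ≤ ψ y} := fun t y hy => show t ≤ ψ y from le_of_lt (show t < ψ y from hy)
  have hNU : ∀ s t : ℝ, s < t → {y : X | t ≤ ψ y} ⊆ {y | s < ψ y} :=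
    fun s t hst y hy => show s < ψ y from lt_of_lt_of_le hst (show t ≤ ψ y from hy)
  -- saturated preimage-image identity and measurability in the quotient
  have hpre : ∀ (A : Set G), (∀ g ∈ A, ∀ t : MulAction.stabilizer G z, g * (t : G) ∈ A) →
      QuotientGroup.mk ⁻¹' (QuotientGroup.mk '' A : Set (G ⧸ MulAction.stabilizer G z)) = A := by
    intro A hA
    ext g
    constructor
    · rintro ⟨a, ha, hag⟩
      have hmem : a⁻¹ * g ∈ MulAction.stabilizer G z := QuotientGroup.eq.mp hag
      have := hA a ha ⟨a⁻¹ * g, hmem⟩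
      simpa [mul_inv_cancel_left] using this
    · intro hg; exact ⟨g, hg, rfl⟩
  have hmeas : ∀ (W : Set X), MeasurableSet {g : G | g • z ∈ W} →
      MeasurableSet (QuotientGroup.mk '' {g : G | g • z ∈ W} :
        Set (G ⧸ MulAction.stabilizer G z)) := by
    intro W hWm
    have : MeasurableSet (QuotientGroup.mk ⁻¹' (QuotientGroup.mk '' {g : G | g • z ∈ W} :
        Set (G ⧸ MulAction.stabilizer G z))) := by
      rw [hpre _ (hsat W)]; exact hWm
    exact this
  have hQmeas : ∀ t : ℝ, MeasurableSet (QuotientGroup.mk '' {g : G | g • z ∈ {y | t ≤ ψ y}} :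
      Set (G ⧸ MulAction.stabilizer G z)) := fun t =>
    hmeas _ (((isClosed_le continuous_const ψ.continuous).preimage hφ).measurableSet)
  have hPmeas : ∀ t : ℝ, MeasurableSet (QuotientGroup.mk '' {g : G | g • z ∈ {y | t < ψ y}} :
      Set (G ⧸ MulAction.stabilizer G z)) := fun t =>
    hmeas _ (((hUopen t).preimage hφ).measurableSet)
  -- the big finite-measure set
  have hKsat : ∀ g ∈ closure {s : G | s • z ∈ V}, ∀ t : MulAction.stabilizer G z,
      g * (t : G) ∈ closure {s : G | s • z ∈ V} := by
    intro g hg t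
    have hcont : Continuous (fun h : G => h * (t : G)) := continuous_id.mul continuous_const
    exact map_mem_closure (f := fun h : G => h * (t : G)) hcont hg (fun a ha => hsat V a ha t)
  have hLfin : νz (QuotientGroup.mk '' closure {s : G | s • z ∈ V}) < ⊤ := by
    refine weil_fin hWeilz hαz hSz hVcomp ?_ hKsat
    have h1 : (1 : G) ∈ {s : G | s • z ∈ V} := by simpa using hzV
    exact interior_maximal subset_closure (hVopen.preimage hφ) h1
  have hQL : ∀ t ∈ Ioo (0:ℝ) 1,
      (QuotientGroup.mk '' {g : G | g • z ∈ {y | t ≤ ψ y}} :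
        Set (G ⧸ MulAction.stabilizer G z)) ⊆
      QuotientGroup.mk '' closure {s : G | s • z ∈ V} := by
    intro t ht
    apply Set.image_mono
    intro g hg
    exact subset_closure (show g • z ∈ V from hNtV t ht hg)
  -- the boundary sets are pairwise disjoint
  have hdisj : Pairwise (Function.onFun Disjoint fun i : ↥(Ioo (0:ℝ) 1) =>
      ((QuotientGroup.mk '' {g : G | g • z ∈ {y | i.1 ≤ ψ y}} :
        Set (G ⧸ MulAction.stabilizer G z)) \
       QuotientGroup.mk '' {g : G | g • z ∈ {y | i.1 < ψ y}})) := by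
    have key : ∀ a b : ℝ, a < b → Disjoint
        ((QuotientGroup.mk '' {g : G | g • z ∈ {y | a ≤ ψ y}} :
          Set (G ⧸ MulAction.stabilizer G z)) \
         QuotientGroup.mk '' {g : G | g • z ∈ {y | a < ψ y}})
        ((QuotientGroup.mk '' {g : G | g • z ∈ {y | b ≤ ψ y}} :
          Set (G ⧸ MulAction.stabilizer G z)) \
         QuotientGroup.mk '' {g : G | g • z ∈ {y | b < ψ y}}) := by
      intro a b hab
      have hsub : (QuotientGroup.mk '' {g : G | g • z ∈ {y | b ≤ ψ y}} :
          Set (G ⧸ MulAction.stabilizer G z)) ⊆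
          QuotientGroup.mk '' {g : G | g • z ∈ {y | a < ψ y}} :=
        Set.image_mono (fun g hg => hNU a b hab hg)
      exact Set.disjoint_sdiff_left.mono_right (Set.diff_subset.trans hsub)
    intro i j hij
    have hne : (i : ℝ) ≠ (j : ℝ) := fun h => hij (Subtype.coe_injective h)
    rcases hne.lt_or_gt with h | h
    · exact key _ _ h
    · exact (key _ _ h).symm
  -- choose t with null boundary
  obtain ⟨t, ht, hDt⟩ : ∃ t ∈ Ioo (0:ℝ) 1,
      νz ((QuotientGroup.mk '' {g : G | g • z ∈ {y | t ≤ ψ y}} :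
        Set (G ⧸ MulAction.stabilizer G z)) \
        QuotientGroup.mk '' {g : G | g • z ∈ {y | t < ψ y}}) = 0 := by
    by_contra hcon
    push_neg at hcon
    have hcount : Set.Countable {i : ↥(Ioo (0:ℝ) 1) |
        0 < νz ((QuotientGroup.mk '' {g : G | g • z ∈ {y | i.1 ≤ ψ y}} :
          Set (G ⧸ MulAction.stabilizer G z)) \
          QuotientGroup.mk '' {g : G | g • z ∈ {y | i.1 < ψ y}})} := by
      apply Measure.countable_meas_pos_of_disjoint_of_meas_iUnion_ne_top νz
        (As := fun i : ↥(Ioo (0:ℝ) 1) => (QuotientGroup.mk '' {g : G | g • z ∈ {y | i.1 ≤ ψ y}} :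
          Set (G ⧸ MulAction.stabilizer G z)) \ QuotientGroup.mk '' {g : G | g • z ∈ {y | i.1 < ψ y}})
        (fun i => (hQmeas i.1).diff (hPmeas i.1)) hdisj
      refine (lt_of_le_of_lt (measure_mono ?_) hLfin).ne
      rintro c ⟨_, ⟨i, rfl⟩, hc⟩
      exact hQL i.1 i.2 hc.1
    have huniv : {i : ↥(Ioo (0:ℝ) 1) |
        0 < νz ((QuotientGroup.mk '' {g : G | g • z ∈ {y | i.1 ≤ ψ y}} :
          Set (G ⧸ MulAction.stabilizer G z)) \
          QuotientGroup.mk '' {g : G | g • z ∈ {y | i.1 < ψ y}})} = Set.univ := by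
      ext i
      simp only [mem_setOf_eq, Set.mem_univ, iff_true]
      exact pos_iff_ne_zero.mpr (hcon i.1 i.2)
    rw [huniv] at hcount
    have hctble : Countable ↥(Ioo (0:ℝ) 1) := Set.countable_univ_iff.mp hcount
    have hmk : (Cardinal.mk ↥(Ioo (0:ℝ) 1)) ≤ Cardinal.aleph0 := Cardinal.mk_le_aleph0
    rw [Cardinal.mk_Ioo_real (by norm_num : (0:ℝ) < 1)] at hmk
    exact Cardinal.aleph0_lt_continuum.not_ge hmk
  -- the chosen neighbourhood
  refine ⟨{y | t ≤ ψ y}, hNtcomp t ht, ?_, hNtV t ht, ?_⟩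
  · exact Filter.mem_of_superset ((hUopen t).mem_nhds (hzU t ht)) (hUN t)
  · have hUsub : {s : G | s • z ∈ {y | t < ψ y}} ⊆ closure {s : G | s • z ∈ V} :=
      fun g hg => subset_closure (hNtV t ht (hUN t hg))
    have hUcomp : IsCompact (closure {s : G | s • z ∈ {y | t < ψ y}}) :=
      hVcomp.of_isClosed_subset isClosed_closure (closure_minimal hUsub isClosed_closure)
    have hPpos : 0 < νz (QuotientGroup.mk '' {s : G | s • z ∈ {y | t < ψ y}}) := by
      refine weil_pos hWeilz ((hUopen t).preimage hφ) ?_ (hsat {y | t < ψ y})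
      simpa using hzU t ht
    have hPfin : νz (QuotientGroup.mk '' {s : G | s • z ∈ {y | t < ψ y}}) < ⊤ := by
      refine lt_of_le_of_lt (measure_mono ?_) hLfin
      exact Set.image_mono hUsub
    have hQeq : νz (QuotientGroup.mk '' {s : G | s • z ∈ {y | t ≤ ψ y}}) =
        νz (QuotientGroup.mk '' {s : G | s • z ∈ {y | t < ψ y}}) := by
      refine le_antisymm ?_ (measure_mono (Set.image_mono (fun g hg => hUN t hg)))
      calc νz (QuotientGroup.mk '' {s : G | s • z ∈ {y | t ≤ ψ y}})
          ≤ νz ((QuotientGroup.mk '' {s : G | s • z ∈ {y | t < ψ y}}) ∪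
              ((QuotientGroup.mk '' {g : G | g • z ∈ {y | t ≤ ψ y}}) \
               QuotientGroup.mk '' {g : G | g • z ∈ {y | t < ψ y}})) := by
            apply measure_mono
            intro c hc
            by_cases h : c ∈ (QuotientGroup.mk '' {s : G | s • z ∈ {y | t < ψ y}} :
              Set (G ⧸ MulAction.stabilizer G z))
            · exact Or.inl h
            · exact Or.inr ⟨hc, h⟩
        _ ≤ νz (QuotientGroup.mk '' {s : G | s • z ∈ {y | t < ψ y}}) +
            νz ((QuotientGroup.mk '' {g : G | g • z ∈ {y | t ≤ ψ y}}) \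
               QuotientGroup.mk '' {g : G | g • z ∈ {y | t < ψ y}}) := measure_union_le _ _
        _ = νz (QuotientGroup.mk '' {s : G | s • z ∈ {y | t < ψ y}}) := by
            rw [hDt, add_zero]
    have hcast : ((k - 1 : ℕ) : ℝ≥0∞) < ENNReal.ofReal R := by
      rw [← ENNReal.ofReal_natCast]
      have hk1 : (0:ℝ) ≤ (k:ℝ) - 1 := by
        have : (1:ℝ) ≤ k := by exact_mod_cast hk
        linarith
      refine (ENNReal.ofReal_lt_ofReal_iff (by linarith)).mpr ?_
      rw [Nat.cast_sub hk]
      simpa using hR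
    calc ((k - 1 : ℕ) : ℝ≥0∞) * νz (QuotientGroup.mk '' {s : G | s • z ∈ {y | t ≤ ψ y}})
        = ((k - 1 : ℕ) : ℝ≥0∞) * νz (QuotientGroup.mk '' {s : G | s • z ∈ {y | t < ψ y}}) := by
          rw [hQeq]
      _ < ENNReal.ofReal R * νz (QuotientGroup.mk '' {s : G | s • z ∈ {y | t < ψ y}}) :=
          (ENNReal.mul_lt_mul_iff_left hPpos.ne' hPfin.ne).mpr hcast
      _ ≤ Filter.liminf
            (fun n => (ν n) (QuotientGroup.mk '' {s : G | s • x n ∈ {y | t < ψ y}})) atTop :=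
          hliminf {y | t < ψ y} (hUopen t) (hzU t ht) hUcomp
      _ ≤ Filter.liminf
            (fun n => (ν n) (QuotientGroup.mk '' {s : G | s • x n ∈ {y | t ≤ ψ y}})) atTop := by
          exact Filter.liminf_le_liminf (Filter.Eventually.of_forall fun n =>
            measure_mono (Set.image_mono (fun g hg => hUN t hg)))
end

section
/- Let (G, X) be a second-countable transformation group with S_z and all S_{x_n} normal in G, where z ∈ X and (x_n) is a sequence in X. Assume that the orbit G·z is locally closed in X and that S_z is compact. Let k be a positive integer, and suppose there exists a real number R > k−1 such that for every open neighbourhood V of z with φ_z^{-1}(V) relatively compact in G one has liminf_n ν_{x_n}(q_{x_n}(φ_{x_n}^{-1}(V))) ≥ R·ν_z(q_z(φ_z^{-1}(V))). Then there exists a sequence (W_m) of compact neighbourhoods of z with W_{m+1} ⊆ W_m which forms a neighbourhood basis at z, such that for each m ≥ 1, liminf_n ν_{x_n}(q_{x_n}(φ_{x_n}^{-1}(W_m))) > (k−1)·ν_z(q_z(φ_z^{-1}(W_m))). -/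
open MeasureTheory Filter
open scoped Pointwise Topology ENNReal

open Set in
private lemma weil_pos_s8 {G : Type*} [Group G] [TopologicalSpace G] [IsTopologicalGroup G]
    [LocallyCompactSpace G] [T2Space G] [MeasurableSpace G] [BorelSpace G]
    (μ : Measure G) [μ.IsHaarMeasure] (S : Subgroup G)
    (α : Measure S) (ν : Measure (G ⧸ S))
    (hW : IsWeilTriple μ S α ν) {U : Set G} (hU : IsOpen U) (hne : U.Nonempty) :
    ν (QuotientGroup.mk '' U) ≠ 0 := by
  obtain ⟨u₀, hu₀⟩ := hne
  obtain ⟨f, hf1, hf0, hfc, hf01⟩ :=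
    exists_continuous_one_zero_of_isCompact (isCompact_singleton (x := u₀))
      hU.isClosed_compl (disjoint_compl_right_iff_subset.mpr (singleton_subset_iff.mpr hu₀))
  intro h0
  have hfi : Integrable f μ := f.continuous.integrable_of_hasCompactSupport hfc
  have hpos : 0 < ∫ s, f s ∂μ := by
    rw [integral_pos_iff_support_of_nonneg (fun s => (hf01 s).1) hfi]
    have hop : IsOpen (Function.support f) := by
      rw [Function.support_eq_preimage]
      exact f.continuous.isOpen_preimage _ isOpen_compl_singleton
    refine hop.measure_pos μ ⟨u₀, ?_⟩
    simp only [Function.mem_support, hf1 (mem_singleton u₀)]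
    exact one_ne_zero
  have hzero : ∫ c : G ⧸ S, (∫ t : S, f (Quotient.out c * (t : G)) ∂α) ∂ν = 0 := by
    have hae : (fun c : G ⧸ S => ∫ t : S, f (Quotient.out c * (t : G)) ∂α) =ᵐ[ν] 0 := by
      rw [Filter.EventuallyEq, ae_iff]
      refine measure_mono_null ?_ h0
      intro c hc
      simp only [mem_setOf_eq, Pi.zero_apply] at hc
      by_contra hcU
      apply hc
      have hz : ∀ t : S, f (Quotient.out c * (t : G)) = 0 := by
        intro t
        by_contra hft
        have hmem : (Quotient.out c) * (t : G) ∈ U := by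
          by_contra hnotU
          exact hft (hf0 hnotU)
        exact hcU ⟨_, hmem, by
          rw [QuotientGroup.mk_mul_of_mem _ t.2]
          exact QuotientGroup.out_eq' c⟩
      simp [hz]
    rw [integral_congr_ae hae]; simp
  rw [hW f f.continuous hfc, hzero] at hpos
  exact lt_irrefl _ hpos

open Set in
private lemma weil_fin_s8 {G : Type*} [Group G] [TopologicalSpace G] [IsTopologicalGroup G]
    [LocallyCompactSpace G] [T2Space G] [MeasurableSpace G] [BorelSpace G]
    (μ : Measure G) [μ.IsHaarMeasure] (S : Subgroup G)
    (α : Measure S) (ν : Measure (G ⧸ S))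
    (hW : IsWeilTriple μ S α ν) (hα : α.IsHaarMeasure) (hS : IsCompact (S : Set G))
    {A : Set G} (hA : IsCompact A) (hsat : ∀ a ∈ A, ∀ t : S, a * (t : G) ∈ A) :
    ν (QuotientGroup.mk '' A) ≠ ∞ := by
  rcases A.eq_empty_or_nonempty with rfl | ⟨a₀, ha₀⟩
  · simp
  haveI : CompactSpace S := isCompact_iff_compactSpace.mp hS
  haveI := hα
  obtain ⟨f, hf1, hf0, hfc, hf01⟩ :=
    exists_continuous_one_zero_of_isCompact hA isClosed_empty (disjoint_bot_right)
  set κ := (α univ).toReal with hκdef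
  have hκfin : α univ ≠ ∞ := (isCompact_univ.measure_lt_top).ne
  have hκ0 : α univ ≠ 0 := (isOpen_univ.measure_pos α univ_nonempty).ne'
  have hκpos : 0 < κ := ENNReal.toReal_pos hκ0 hκfin
  -- out of a coset in the image lies in A
  have hout : ∀ c : G ⧸ S, c ∈ QuotientGroup.mk '' A → (Quotient.out c : G) ∈ A := by
    rintro c ⟨a, ha, rfl⟩
    have h1 : (QuotientGroup.mk a : G ⧸ S) = QuotientGroup.mk (Quotient.out (QuotientGroup.mk a : G ⧸ S)) := by
      rw [QuotientGroup.out_eq']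
    have h2 : a⁻¹ * Quotient.out (QuotientGroup.mk a : G ⧸ S) ∈ S := QuotientGroup.eq.mp h1
    have := hsat a ha ⟨_, h2⟩
    simpa [mul_inv_cancel_left] using this
  have hFval : ∀ c : G ⧸ S, c ∈ QuotientGroup.mk '' A →
      (∫ t : S, f (Quotient.out c * (t : G)) ∂α) = κ := by
    intro c hc
    have hz : ∀ t : S, f (Quotient.out c * (t : G)) = 1 := fun t =>
      hf1 (hsat _ (hout c hc) t)
    simp [hz, hκdef, measureReal_def]
  have hAmeas : MeasurableSet (QuotientGroup.mk '' A : Set (G ⧸ S)) := by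
    rw [measurableSet_quotient]
    have : (Quotient.mk'' ⁻¹' ((QuotientGroup.mk '' A) : Set (G ⧸ S)) : Set G) = A := by
      ext g
      constructor
      · rintro ⟨a, ha, hag⟩
        have h2 : a⁻¹ * g ∈ S := QuotientGroup.eq.mp hag
        have := hsat a ha ⟨_, h2⟩
        simpa [mul_inv_cancel_left] using this
      · intro hg
        exact ⟨g, hg, rfl⟩
    rw [this]
    exact hA.isClosed.measurableSet
  intro htop
  have heq := hW f f.continuous hfc
  have hpos : 0 < ∫ s, f s ∂μ := by
    rw [integral_pos_iff_support_of_nonneg (fun s => (hf01 s).1)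
      (f.continuous.integrable_of_hasCompactSupport hfc)]
    have hop : IsOpen (Function.support f) := by
      rw [Function.support_eq_preimage]
      exact f.continuous.isOpen_preimage _ isOpen_compl_singleton
    refine hop.measure_pos μ ⟨a₀, ?_⟩
    simp only [Function.mem_support, hf1 ha₀]
    exact one_ne_zero
  have hInt : Integrable (fun c : G ⧸ S => ∫ t : S, f (Quotient.out c * (t : G)) ∂α) ν := by
    by_contra h
    rw [integral_undef h] at heq
    rw [heq] at hpos
    exact lt_irrefl _ hpos
  have hlt := hInt.2
  rw [HasFiniteIntegral] at hlt
  have hge : (∞ : ℝ≥0∞) ≤ ∫⁻ c, ‖(∫ t : S, f (Quotient.out c * (t : G)) ∂α)‖₊ ∂ν := by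
    have h1 : (∞ : ℝ≥0∞) = ENNReal.ofReal κ * ν (QuotientGroup.mk '' A) := by
      rw [htop, ENNReal.mul_top]
      simp [ENNReal.ofReal_eq_zero, not_le, hκpos]
    rw [h1, ← setLIntegral_const (QuotientGroup.mk '' A) (ENNReal.ofReal κ),
      ← lintegral_indicator hAmeas]
    refine lintegral_mono fun c => ?_
    by_cases hc : c ∈ QuotientGroup.mk '' A
    · rw [indicator_of_mem hc, hFval c hc, ← Real.enorm_eq_ofReal hκpos.le]
      exact (enorm_eq_nnnorm κ).le
    · simp [indicator_of_notMem hc]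
  exact lt_irrefl _ (lt_of_le_of_lt hge hlt)

open Set in
private lemma key_step {G X : Type*} [Group G] [TopologicalSpace G] [IsTopologicalGroup G]
    [LocallyCompactSpace G] [T2Space G] [SecondCountableTopology G]
    [TopologicalSpace X] [T2Space X] [LocallyCompactSpace X] [SecondCountableTopology X]
    [MulAction G X] [ContinuousSMul G X]
    [MeasurableSpace G] [BorelSpace G]
    (μ : Measure G) [μ.IsHaarMeasure]
    (z : X) (x : ℕ → X)
    (hSz : IsCompact (MulAction.stabilizer G z : Set G))
    (αz : Measure (MulAction.stabilizer G z)) (hαz : αz.IsHaarMeasure)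
    (νz : Measure (G ⧸ MulAction.stabilizer G z))
    (ν : ∀ n, Measure (G ⧸ MulAction.stabilizer G (x n)))
    (hWeilz : IsWeilTriple μ (MulAction.stabilizer G z) αz νz)
    (k : ℕ) (hk : 0 < k) (R : ℝ) (hR : (k : ℝ) - 1 < R)
    (hliminf : ∀ V : Set X, IsOpen V → z ∈ V →
      IsCompact (closure {s : G | s • z ∈ V}) →
      ENNReal.ofReal R * νz (QuotientGroup.mk '' {s : G | s • z ∈ V}) ≤
        Filter.liminf (fun n => (ν n) (QuotientGroup.mk '' {s : G | s • x n ∈ V})) atTop)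
    (W₀ : Set X) (hW₀pre : IsCompact {s : G | s • z ∈ W₀})
    (O : Set X) (hOopen : IsOpen O) (hzO : z ∈ O) (hOW₀ : O ⊆ W₀) :
    ∃ W : Set X, IsCompact W ∧ W ∈ 𝓝 z ∧ W ⊆ O ∧
      ((k - 1 : ℕ) : ℝ≥0∞) * νz (QuotientGroup.mk '' {s : G | s • z ∈ W}) <
        Filter.liminf (fun n => (ν n) (QuotientGroup.mk '' {s : G | s • x n ∈ W})) atTop := by
  classical
  have hR0 : (0 : ℝ) < R := by
    have h1 : (1 : ℝ) ≤ (k : ℝ) := by exact_mod_cast hk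
    linarith
  have hφcont : Continuous (fun s : G => s • z) := continuous_id.smul continuous_const
  obtain ⟨f, hf1, hf0, hfc, hf01⟩ :=
    exists_continuous_one_zero_of_isCompact (isCompact_singleton (x := z)) hOopen.isClosed_compl
      (disjoint_compl_right_iff_subset.mpr (singleton_subset_iff.mpr hzO))
  have hAW₀ : ∀ t : ℝ, 0 < t → {s : G | s • z ∈ f ⁻¹' Ici t} ⊆ {s : G | s • z ∈ W₀} := by
    intro t ht s hs
    have hfz : f (s • z) ≠ 0 := by
      have : t ≤ f (s • z) := hs
      intro h0; rw [h0] at this; linarith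
    have hO : s • z ∈ O := by
      by_contra h
      exact hfz (hf0 h)
    exact hOW₀ hO
  have hAclosed : ∀ t : ℝ, IsClosed {s : G | s • z ∈ f ⁻¹' Ici t} := fun t =>
    (isClosed_Ici.preimage f.continuous).preimage hφcont
  have hAcomp : ∀ t : ℝ, 0 < t → IsCompact {s : G | s • z ∈ f ⁻¹' Ici t} := fun t ht =>
    IsCompact.of_isClosed_subset hW₀pre (hAclosed t) (hAW₀ t ht)
  have hsatpre : ∀ B : Set X,
      (Quotient.mk'' ⁻¹' ((QuotientGroup.mk '' {s : G | s • z ∈ B}) :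
        Set (G ⧸ MulAction.stabilizer G z)) : Set G) = {s : G | s • z ∈ B} := by
    intro B
    ext g
    constructor
    · rintro ⟨a, ha, hag⟩
      have h2 : a⁻¹ * g ∈ MulAction.stabilizer G z := QuotientGroup.eq.mp hag
      have h3 : g = a * (a⁻¹ * g) := (mul_inv_cancel_left a g).symm
      show g • z ∈ B
      rw [h3, mul_smul, (MulAction.mem_stabilizer_iff).mp h2]
      exact ha
    · intro hg
      exact ⟨g, hg, rfl⟩
  have hmeas : ∀ t : ℝ, 0 < t → MeasurableSet ((QuotientGroup.mk ''
      {s : G | s • z ∈ f ⁻¹' Ici t}) : Set (G ⧸ MulAction.stabilizer G z)) := by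
    intro t ht
    rw [measurableSet_quotient]
    rw [hsatpre (f ⁻¹' Ici t)]
    exact (hAclosed t).measurableSet
  set g : ℝ → ℝ≥0∞ := fun t => νz (QuotientGroup.mk '' {s : G | s • z ∈ f ⁻¹' Ici t}) with hgdef
  have hganti : Antitone g := by
    intro t t' htt'
    refine measure_mono (image_mono ?_)
    intro s hs
    exact le_trans htt' hs
  have hDcount : Set.Countable {t : ℝ | ¬ContinuousAt g t} := hganti.countable_not_continuousAt
  have hsub : ¬ (Ioo (0 : ℝ) 1 ⊆ {t | ¬ContinuousAt g t}) := by
    intro hsub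
    have h1 : volume (Ioo (0 : ℝ) 1) ≤ volume {t : ℝ | ¬ContinuousAt g t} := measure_mono hsub
    rw [hDcount.measure_zero, Real.volume_Ioo] at h1
    simp at h1
  obtain ⟨t₀, ht₀, ht₀cont⟩ := not_subset.mp hsub
  simp only [mem_setOf_eq, not_not] at ht₀cont
  obtain ⟨ht₀pos, ht₀lt1⟩ := ht₀
  refine ⟨f ⁻¹' Ici t₀, ?_, ?_, ?_, ?_⟩
  · -- compact
    refine IsCompact.of_isClosed_subset hfc (isClosed_Ici.preimage f.continuous) ?_
    intro y hy
    apply subset_tsupport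
    have : t₀ ≤ f y := hy
    intro h0
    rw [h0] at this; linarith
  · -- nbhd
    have hzV : z ∈ f ⁻¹' Ioi t₀ := by
      show f z ∈ Ioi t₀
      rw [hf1 (mem_singleton z)]
      exact ht₀lt1
    exact mem_of_superset ((isOpen_Ioi.preimage f.continuous).mem_nhds hzV)
      (preimage_mono Ioi_subset_Ici_self)
  · -- subset O
    intro y hy
    by_contra h
    have h0 : f y = 0 := hf0 h
    have : t₀ ≤ f y := hy
    rw [h0] at this; linarith
  · -- main inequality
    have hUnion : {s : G | s • z ∈ f ⁻¹' Ioi t₀} =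
        ⋃ n : ℕ, {s : G | s • z ∈ f ⁻¹' Ici (t₀ + 1 / ((n : ℝ) + 1))} := by
      ext s
      simp only [mem_setOf_eq, mem_iUnion, mem_preimage, mem_Ioi, mem_Ici]
      constructor
      · intro h
        obtain ⟨n, hn⟩ := exists_nat_one_div_lt (sub_pos.mpr h)
        exact ⟨n, by linarith⟩
      · rintro ⟨n, hn⟩
        have h2 : (0 : ℝ) < 1 / ((n : ℝ) + 1) := by positivity
        linarith
    have hdir : Monotone (fun n : ℕ => (QuotientGroup.mk ''
        {s : G | s • z ∈ f ⁻¹' Ici (t₀ + 1 / ((n : ℝ) + 1))} :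
          Set (G ⧸ MulAction.stabilizer G z))) := by
      intro n m hnm
      refine image_mono ?_
      intro s hs
      have h2 : t₀ + 1 / ((m : ℝ) + 1) ≤ t₀ + 1 / ((n : ℝ) + 1) := by
        have : ((n : ℝ) + 1) ≤ ((m : ℝ) + 1) := by exact_mod_cast Nat.succ_le_succ hnm
        have := one_div_le_one_div_of_le (by positivity : (0:ℝ) < (n : ℝ) + 1) this
        linarith
      exact le_trans h2 hs
    have hVmeas : νz (QuotientGroup.mk '' {s : G | s • z ∈ f ⁻¹' Ioi t₀}) =
        ⨆ n : ℕ, g (t₀ + 1 / ((n : ℝ) + 1)) := by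
      rw [hUnion, image_iUnion, Directed.measure_iUnion hdir.directed_le]
    have htseq : Tendsto (fun n : ℕ => t₀ + 1 / ((n : ℝ) + 1)) atTop (𝓝 t₀) := by
      have h1 := tendsto_one_div_add_atTop_nhds_zero_nat (𝕜 := ℝ)
      have h2 := (tendsto_const_nhds (x := t₀) (f := (atTop : Filter ℕ))).add h1
      simpa using h2
    have hgt : Tendsto (fun n : ℕ => g (t₀ + 1 / ((n : ℝ) + 1))) atTop (𝓝 (g t₀)) :=
      (ht₀cont.tendsto).comp htseq
    have hmono2 : Monotone (fun n : ℕ => g (t₀ + 1 / ((n : ℝ) + 1))) := by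
      intro n m hnm
      apply hganti
      have : ((n : ℝ) + 1) ≤ ((m : ℝ) + 1) := by exact_mod_cast Nat.succ_le_succ hnm
      have := one_div_le_one_div_of_le (by positivity : (0:ℝ) < (n : ℝ) + 1) this
      linarith
    have hVg : νz (QuotientGroup.mk '' {s : G | s • z ∈ f ⁻¹' Ioi t₀}) = g t₀ := by
      rw [hVmeas]
      exact tendsto_nhds_unique (tendsto_atTop_iSup hmono2) hgt
    have hpos : νz (QuotientGroup.mk '' {s : G | s • z ∈ f ⁻¹' Ioi t₀}) ≠ 0 := by
      refine weil_pos_s8 μ _ αz νz hWeilz ((isOpen_Ioi.preimage f.continuous).preimage hφcont) ?_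
      refine ⟨1, ?_⟩
      show (1 : G) • z ∈ f ⁻¹' Ioi t₀
      rw [one_smul]
      show f z ∈ Ioi t₀
      rw [hf1 (mem_singleton z)]
      exact ht₀lt1
    have hfin : g t₀ ≠ ∞ := by
      refine weil_fin_s8 μ _ αz νz hWeilz hαz hSz (hAcomp t₀ ht₀pos) ?_
      intro a ha t
      show (a * (t : G)) • z ∈ f ⁻¹' Ici t₀
      rw [mul_smul, (MulAction.mem_stabilizer_iff).mp t.2]
      exact ha
    have hVsubW : {s : G | s • z ∈ f ⁻¹' Ioi t₀} ⊆ {s : G | s • z ∈ f ⁻¹' Ici t₀} :=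
      fun s hs => (le_of_lt (show t₀ < f (s • z) from hs) : t₀ ≤ f (s • z))
    have hlim := hliminf (f ⁻¹' Ioi t₀) (isOpen_Ioi.preimage f.continuous)
      (by show f z ∈ Ioi t₀; rw [hf1 (mem_singleton z)]; exact ht₀lt1)
      (by
        refine IsCompact.of_isClosed_subset (hAcomp t₀ ht₀pos) isClosed_closure
          (closure_minimal hVsubW (hAclosed t₀)))
    have hmono3 : Filter.liminf (fun n => (ν n)
          (QuotientGroup.mk '' {s : G | s • x n ∈ f ⁻¹' Ioi t₀})) atTop ≤
        Filter.liminf (fun n => (ν n)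
          (QuotientGroup.mk '' {s : G | s • x n ∈ f ⁻¹' Ici t₀})) atTop := by
      refine liminf_le_liminf (Eventually.of_forall fun n => ?_)
      refine measure_mono (image_mono (fun s hs => ?_))
      exact (le_of_lt (show t₀ < f (s • x n) from hs) : t₀ ≤ f (s • x n))
    have hcast : ((k - 1 : ℕ) : ℝ≥0∞) = ENNReal.ofReal ((k : ℝ) - 1) := by
      rw [← ENNReal.ofReal_natCast]
      congr 1
      rw [Nat.cast_sub hk, Nat.cast_one]
    have hWg : νz (QuotientGroup.mk '' {s : G | s • z ∈ f ⁻¹' Ici t₀}) = g t₀ := rfl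
    calc ((k - 1 : ℕ) : ℝ≥0∞) * νz (QuotientGroup.mk '' {s : G | s • z ∈ f ⁻¹' Ici t₀})
        = ENNReal.ofReal ((k : ℝ) - 1) *
            νz (QuotientGroup.mk '' {s : G | s • z ∈ f ⁻¹' Ioi t₀}) := by
          rw [hcast, hWg, hVg]
      _ < ENNReal.ofReal R * νz (QuotientGroup.mk '' {s : G | s • z ∈ f ⁻¹' Ioi t₀}) := by
          rw [ENNReal.mul_lt_mul_iff_left hpos (by rw [hVg]; exact hfin)]
          exact (ENNReal.ofReal_lt_ofReal_iff hR0).mpr hR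
      _ ≤ _ := le_trans hlim hmono3

/-- If `G·z` is locally closed, `S_z` is compact, all stability subgroups
are normal, and there is `R > k − 1` such that
`liminf_n ν_{x_n}(q_{x_n}(φ_{x_n}⁻¹ V)) ≥ R·ν_z(q_z(φ_z⁻¹ V))` for every open
neighbourhood `V` of `z` with relatively compact `φ_z⁻¹(V)`, then there is a decreasing
sequence `(W_m)` of compact neighbourhoods of `z` forming a basis at `z` with
`liminf_n ν_{x_n}(q_{x_n}(φ_{x_n}⁻¹ W_m)) > (k−1)·ν_z(q_z(φ_z⁻¹ W_m))` for each `m`. -/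
theorem stmt8 {G X : Type*} [Group G] [TopologicalSpace G] [IsTopologicalGroup G]
    [LocallyCompactSpace G] [T2Space G] [SecondCountableTopology G]
    [TopologicalSpace X] [T2Space X] [LocallyCompactSpace X] [SecondCountableTopology X]
    [MulAction G X] [ContinuousSMul G X]
    [MeasurableSpace G] [BorelSpace G]
    (μ : Measure G) [μ.IsHaarMeasure]
    (z : X) (x : ℕ → X)
    (hzN : (MulAction.stabilizer G z).Normal)
    (hnN : ∀ n, (MulAction.stabilizer G (x n)).Normal)
    (hlc : IsLocallyClosed (MulAction.orbit G z))
    (hSz : IsCompact (MulAction.stabilizer G z : Set G))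
    (αz : Measure (MulAction.stabilizer G z)) (hαz : αz.IsHaarMeasure)
    (α : ∀ n, Measure (MulAction.stabilizer G (x n))) (hα : ∀ n, (α n).IsHaarMeasure)
    (νz : Measure (G ⧸ MulAction.stabilizer G z))
    (ν : ∀ n, Measure (G ⧸ MulAction.stabilizer G (x n)))
    (hWeilz : IsWeilTriple μ (MulAction.stabilizer G z) αz νz)
    (hWeil : ∀ n, IsWeilTriple μ (MulAction.stabilizer G (x n)) (α n) (ν n))
    (hinvz : IsRightInvariantQuot (MulAction.stabilizer G z) νz)
    (hinv : ∀ n, IsRightInvariantQuot (MulAction.stabilizer G (x n)) (ν n))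
    (k : ℕ) (hk : 0 < k) (R : ℝ) (hR : (k : ℝ) - 1 < R)
    (hliminf : ∀ V : Set X, IsOpen V → z ∈ V →
      IsCompact (closure {s : G | s • z ∈ V}) →
      ENNReal.ofReal R * νz (QuotientGroup.mk '' {s : G | s • z ∈ V}) ≤
        Filter.liminf (fun n => (ν n) (QuotientGroup.mk '' {s : G | s • x n ∈ V})) atTop) :
    ∃ W : ℕ → Set X,
      (∀ m, IsCompact (W m) ∧ W m ∈ 𝓝 z) ∧
      (∀ m, W (m + 1) ⊆ W m) ∧
      (∀ U ∈ 𝓝 z, ∃ m, W m ⊆ U) ∧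
      (∀ m, ((k - 1 : ℕ) : ℝ≥0∞) * νz (QuotientGroup.mk '' {s : G | s • z ∈ W m}) <
        Filter.liminf (fun n => (ν n) (QuotientGroup.mk '' {s : G | s • x n ∈ W m})) atTop) := by
  classical
  -- Step 1: Effros open-mapping argument: a compact neighbourhood `W₀` of `z`
  -- whose preimage under the orbit map is compact.
  have hφcont : Continuous (fun s : G => s • z) := continuous_id.smul continuous_const
  haveI : LocallyCompactSpace ↥(MulAction.orbit G z) := hlc.locallyCompactSpace
  haveI : ContinuousSMul G ↥(MulAction.orbit G z) :=
    Topology.IsInducing.subtypeVal.continuousSMul continuous_id rfl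
  obtain ⟨W₀, hW₀c, hzW₀, hW₀pre⟩ :
      ∃ W₀ : Set X, IsCompact W₀ ∧ z ∈ interior W₀ ∧ IsCompact {s : G | s • z ∈ W₀} := by
    have hopen : IsOpenMap
        (fun g : G => g • (⟨z, MulAction.mem_orbit_self z⟩ : MulAction.orbit G z)) :=
      isOpenMap_smul_of_sigmaCompact _
    obtain ⟨K, hKc, hK1⟩ := exists_compact_mem_nhds (1 : G)
    have hTopen : IsOpen ((fun g : G => g •
        (⟨z, MulAction.mem_orbit_self z⟩ : MulAction.orbit G z)) '' interior K) :=
      hopen _ isOpen_interior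
    obtain ⟨U₁, hU₁open, hU₁eq⟩ := isOpen_induced_iff.mp hTopen
    have hzU₁ : z ∈ U₁ := by
      have h1 : (⟨z, MulAction.mem_orbit_self z⟩ : MulAction.orbit G z) ∈ (fun g : G => g •
          (⟨z, MulAction.mem_orbit_self z⟩ : MulAction.orbit G z)) '' interior K :=
        ⟨1, mem_interior_iff_mem_nhds.mpr hK1, one_smul _ _⟩
      rw [← hU₁eq] at h1
      exact h1
    obtain ⟨W₀, hW₀c, hzW₀, hW₀U₁⟩ := exists_compact_subset hU₁open hzU₁
    refine ⟨W₀, hW₀c, hzW₀, ?_⟩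
    refine IsCompact.of_isClosed_subset (hKc.mul hSz) (hW₀c.isClosed.preimage hφcont) ?_
    intro s hs
    have h1 : (⟨s • z, MulAction.mem_orbit z s⟩ : MulAction.orbit G z) ∈
        (Subtype.val ⁻¹' U₁ : Set (MulAction.orbit G z)) := hW₀U₁ hs
    rw [hU₁eq] at h1
    obtain ⟨u, hu, huv⟩ := h1
    have huz : u • z = s • z := congrArg Subtype.val huv
    have hmem : u⁻¹ * s ∈ MulAction.stabilizer G z := by
      rw [MulAction.mem_stabilizer_iff, mul_smul, ← huz, inv_smul_smul]
    have hrw : u * (u⁻¹ * s) = s := mul_inv_cancel_left u s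
    rw [← hrw]
    exact Set.mul_mem_mul (interior_subset hu) hmem
  -- Step 2: the one-step construction, via `key_step`.
  have key : ∀ O : Set X, ∃ W : Set X, IsOpen O → z ∈ O → O ⊆ W₀ →
      IsCompact W ∧ W ∈ 𝓝 z ∧ W ⊆ O ∧
      ((k - 1 : ℕ) : ℝ≥0∞) * νz (QuotientGroup.mk '' {s : G | s • z ∈ W}) <
        Filter.liminf (fun n => (ν n) (QuotientGroup.mk '' {s : G | s • x n ∈ W})) atTop := by
    intro O
    by_cases hO : IsOpen O ∧ z ∈ O ∧ O ⊆ W₀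
    · obtain ⟨h1, h2, h3⟩ := hO
      obtain ⟨W, hW⟩ := key_step μ z x hSz αz hαz νz ν hWeilz k hk R hR hliminf W₀ hW₀pre O h1 h2 h3
      exact ⟨W, fun _ _ _ => hW⟩
    · exact ⟨∅, fun h1 h2 h3 => absurd ⟨h1, h2, h3⟩ hO⟩
  choose Wc hWc using key
  obtain ⟨B, hB⟩ := (𝓝 z).exists_antitone_basis
  have hBmem : ∀ m, B m ∈ 𝓝 z := fun m => hB.1.mem_of_mem trivial
  let Wseq : ℕ → Set X := fun m =>
    Nat.rec (Wc (interior W₀ ∩ interior (B 0)))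
      (fun m prev => Wc (interior prev ∩ interior (B (m + 1)))) m
  have hmain : ∀ m, IsCompact (Wseq m) ∧ Wseq m ∈ 𝓝 z ∧ Wseq m ⊆ W₀ ∧ Wseq m ⊆ B m ∧
      ((k - 1 : ℕ) : ℝ≥0∞) * νz (QuotientGroup.mk '' {s : G | s • z ∈ Wseq m}) <
        Filter.liminf (fun n => (ν n) (QuotientGroup.mk '' {s : G | s • x n ∈ Wseq m})) atTop := by
    intro m
    induction m with
    | zero =>
      have hOopen : IsOpen (interior W₀ ∩ interior (B 0)) := isOpen_interior.inter isOpen_interior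
      have hzO : z ∈ interior W₀ ∩ interior (B 0) :=
        ⟨hzW₀, mem_interior_iff_mem_nhds.mpr (hBmem 0)⟩
      have hOW : interior W₀ ∩ interior (B 0) ⊆ W₀ := Set.inter_subset_left.trans interior_subset
      obtain ⟨hc, hn, hsub, hineq⟩ := hWc _ hOopen hzO hOW
      exact ⟨hc, hn, hsub.trans hOW, hsub.trans (Set.inter_subset_right.trans interior_subset), hineq⟩
    | succ m ih =>
      obtain ⟨ihc, ihn, ihW₀, ihB, ihineq⟩ := ih
      have hOopen : IsOpen (interior (Wseq m) ∩ interior (B (m + 1))) :=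
        isOpen_interior.inter isOpen_interior
      have hzO : z ∈ interior (Wseq m) ∩ interior (B (m + 1)) :=
        ⟨mem_interior_iff_mem_nhds.mpr ihn, mem_interior_iff_mem_nhds.mpr (hBmem (m + 1))⟩
      have hOW : interior (Wseq m) ∩ interior (B (m + 1)) ⊆ W₀ :=
        Set.inter_subset_left.trans (interior_subset.trans ihW₀)
      obtain ⟨hc, hn, hsub, hineq⟩ := hWc _ hOopen hzO hOW
      exact ⟨hc, hn, hsub.trans hOW, hsub.trans (Set.inter_subset_right.trans interior_subset), hineq⟩
  have hdec : ∀ m, Wseq (m + 1) ⊆ Wseq m := by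
    intro m
    obtain ⟨-, ihn, ihW₀, -, -⟩ := hmain m
    have hzO : z ∈ interior (Wseq m) ∩ interior (B (m + 1)) :=
      ⟨mem_interior_iff_mem_nhds.mpr ihn, mem_interior_iff_mem_nhds.mpr (hBmem (m + 1))⟩
    obtain ⟨-, -, hsub, -⟩ := hWc _ (isOpen_interior.inter isOpen_interior) hzO
      (Set.inter_subset_left.trans (interior_subset.trans ihW₀))
    exact hsub.trans (Set.inter_subset_left.trans interior_subset)
  refine ⟨Wseq, fun m => ⟨(hmain m).1, (hmain m).2.1⟩, hdec, ?_, fun m => (hmain m).2.2.2.2⟩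
  intro U hU
  obtain ⟨m, -, hmsub⟩ := hB.1.mem_iff.mp hU
  exact ⟨m, ((hmain m).2.2.2.1).trans hmsub⟩
end

section
/- Let (G, X) be a transformation group, let z ∈ X, and let V be an open subset of X such that V ∩ (cl(G·z) \ G·z) ≠ ∅, where cl denotes closure in X. Then for every compact subset K of G there exists t ∈ G \ K S_z such that t·z ∈ V. -/
open scoped Pointwise

/-- If an open set `V` meets `cl(G·z) \ G·z`, then for every compact `K ⊆ G`
there exists `t ∈ G \ K S_z` with `t • z ∈ V`. -/
theorem stmt9 {G X : Type*} [Group G] [TopologicalSpace G] [IsTopologicalGroup G]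
    [LocallyCompactSpace G] [T2Space G]
    [TopologicalSpace X] [T2Space X] [LocallyCompactSpace X]
    [MulAction G X] [ContinuousSMul G X]
    (z : X) (V : Set X) (hV : IsOpen V)
    (hne : (V ∩ (closure (MulAction.orbit G z) \ MulAction.orbit G z)).Nonempty) :
    ∀ K : Set G, IsCompact K →
      ∃ t : G, t ∉ K * (MulAction.stabilizer G z : Set G) ∧ t • z ∈ V := by
  intro K hK
  obtain ⟨y, hyV, hycl, hyorb⟩ := hne
  -- K • z is compact, hence closed
  have hKz : IsCompact ((fun s : G => s • z) '' K) :=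
    hK.image (continuous_id.smul continuous_const)
  have hKzc : IsClosed ((fun s : G => s • z) '' K) := hKz.isClosed
  have hyKz : y ∉ (fun s : G => s • z) '' K := by
    rintro ⟨k, -, rfl⟩
    exact hyorb ⟨k, rfl⟩
  have hopen : IsOpen (V \ (fun s : G => s • z) '' K) := hV.sdiff hKzc
  have hy : y ∈ V \ (fun s : G => s • z) '' K := ⟨hyV, hyKz⟩
  obtain ⟨w, hw, t, rfl⟩ :=
    mem_closure_iff.mp hycl _ hopen hy
  refine ⟨t, ?_, hw.1⟩
  rintro ⟨k, hk, s, hs, rfl⟩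
  exact hw.2 ⟨k, hk, by
    have : s • z = z := hs
    simp [mul_smul, this]⟩
end
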